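/- Let S = ⟨v₀,…,v_{h−1}⟩ be a strongly increasing numerical semigroup generated by the characteristic sequence (v₀,…,v_{h−1}) with embedding dimension h ≥ 2, and let d > 1 and γ > d·gcd(v₀,…,v_{h−2})·v_{h−1} be coprime integers. Then the gluing S ⊕_{d,γ} ℕ = ⟨dv₀,…,dv_{h−1},γ⟩ is a strongly increasing numerical semigroup, i.e., (dv₀,…,dv_{h−1},γ) is a characteristic sequence. -/

import Mathlib

/-- A numerical semigroup: a subset of ℕ containing 0, closed under addition,
with finite complement. -/
def IsNumericalSemigroup (S : Set ℕ) : Prop :=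
  0 ∈ S ∧ (∀ a ∈ S, ∀ b ∈ S, a + b ∈ S) ∧ Sᶜ.Finite

/-- Frobenius number, as an integer (so that F(ℕ) = -1). -/
noncomputable def Frob (S : Set ℕ) : ℤ :=
  sSup (((fun n : ℕ => (n : ℤ)) '' Sᶜ) ∪ {-1})

/-- Submonoid of ℕ generated by a set. -/
def GenSg (A : Set ℕ) : Set ℕ := (AddSubmonoid.closure A : Set ℕ)

/-- The gluing S ⊕_{d,γ} ℕ = d·S + ℕ·γ. -/
def Gluing (S : Set ℕ) (d γ : ℕ) : Set ℕ :=
  {x | ∃ s ∈ S, ∃ k : ℕ, x = d * s + k * γ}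

/-- e_k = gcd(v₀, …, v_k). -/
def ee (v : ℕ → ℕ) (k : ℕ) : ℕ := (Finset.range (k + 1)).gcd v

/-- (v₀,…,v_h) is a characteristic sequence. -/
def IsCharSeq (h : ℕ) (v : ℕ → ℕ) : Prop :=
  (∀ i ≤ h, 0 < v i) ∧
  (∀ k, 1 ≤ k → k ≤ h → ee v k < ee v (k - 1)) ∧
  ee v h = 1 ∧
  ∀ k, 1 ≤ k → k + 1 ≤ h → ee v (k - 1) * v k < ee v k * v (k + 1)

/-- T is a GSI-semigroup: T = S ⊕_{d,γ} ℕ where S = ⟨A⟩ is a numerical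
semigroup, d ≥ 2, gcd(d,γ)=1 and γ > max{d·F(S), d·(max A)}. -/
def IsGSI (T : Set ℕ) : Prop :=
  ∃ (A : Finset ℕ) (d γ : ℕ), A.Nonempty ∧ 2 ≤ d ∧ Nat.Coprime d γ ∧
    IsNumericalSemigroup (GenSg ↑A) ∧
    (γ : ℤ) > d * Frob (GenSg ↑A) ∧ (∀ a ∈ A, d * a < γ) ∧
    T = Gluing (GenSg ↑A) d γ

/-- closure of (d•A ∪ {γ}) equals the gluing. -/
lemma genSg_union_eq_gluing (A : Set ℕ) (d γ : ℕ) :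
    Gluing (GenSg A) d γ = GenSg ((fun x => d * x) '' A ∪ {γ}) := by
  ext x
  simp only [Gluing, GenSg, Set.mem_setOf_eq, SetLike.mem_coe]
  constructor
  · rintro ⟨s, hs, k, rfl⟩
    have hds : d * s ∈ AddSubmonoid.closure ((fun x => d * x) '' A ∪ {γ}) := by
      have hs' : s ∈ AddSubmonoid.closure A := hs
      clear hs
      induction hs' using AddSubmonoid.closure_induction with
      | mem a ha =>
          exact AddSubmonoid.subset_closure (Or.inl ⟨a, ha, rfl⟩)
      | zero => rw [Nat.mul_zero]; exact zero_mem _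
      | add a b _ _ ha hb => rw [Nat.mul_add]; exact add_mem ha hb
    have hkγ : k * γ ∈ AddSubmonoid.closure ((fun x => d * x) '' A ∪ {γ}) := by
      have : γ ∈ AddSubmonoid.closure ((fun x => d * x) '' A ∪ {γ}) :=
        AddSubmonoid.subset_closure (Or.inr rfl)
      simpa [nsmul_eq_mul] using nsmul_mem this k
    exact add_mem hds hkγ
  · intro hx
    induction hx using AddSubmonoid.closure_induction with
    | mem a ha =>
        rcases ha with ⟨b, hb, rfl⟩ | rfl
        · exact ⟨b, AddSubmonoid.subset_closure hb, 0, by ring⟩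
        · exact ⟨0, (AddSubmonoid.closure A).zero_mem, 1, by ring⟩
    | zero => exact ⟨0, (AddSubmonoid.closure A).zero_mem, 0, by ring⟩
    | add a b _ _ ha hb =>
        obtain ⟨s1, hs1, k1, rfl⟩ := ha
        obtain ⟨s2, hs2, k2, rfl⟩ := hb
        exact ⟨s1 + s2, add_mem hs1 hs2, k1 + k2, by ring⟩

theorem gluing_of_SI_is_SI (h : ℕ) (v : ℕ → ℕ) (hh : 2 ≤ h)
    (hv : IsCharSeq (h - 1) v)
    (hinj : ∀ i j, i ≤ h - 1 → j ≤ h - 1 → v i = v j → i = j)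
    (hmin : ∀ B ⊂ v '' {i | i ≤ h - 1},
      GenSg B ≠ GenSg (v '' {i | i ≤ h - 1}))
    (d γ : ℕ) (hd : 1 < d) (hco : Nat.Coprime d γ)
    (hγ : d * ee v (h - 2) * v (h - 1) < γ) :
    IsCharSeq h (fun i => if i < h then d * v i else γ) ∧
    Gluing (GenSg (v '' {i | i ≤ h - 1})) d γ =
      GenSg ((fun i => if i < h then d * v i else γ) '' {i | i ≤ h}) := by
  obtain ⟨hpos, hdec, hone, hineq⟩ := hv
  set w : ℕ → ℕ := fun i => if i < h then d * v i else γ with hw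
  have hγpos : 0 < γ := lt_of_le_of_lt (Nat.zero_le _) hγ
  -- ee of w below h
  have heew : ∀ k, k ≤ h - 1 → ee w k = d * ee v k := by
    intro k hk
    have : ∀ i ∈ Finset.range (k + 1), w i = d * v i := by
      intro i hi
      have : i < h := lt_of_lt_of_le (Finset.mem_range.mp hi) (by omega)
      simp [hw, this]
    rw [ee, Finset.gcd_congr rfl this, Finset.gcd_mul_left, ee]
    simp
  have heeh1 : ee w (h - 1) = d := by
    rw [heew (h - 1) le_rfl, hone, mul_one]
  have heeh : ee w h = 1 := by
    have hsplit : Finset.range (h + 1) = insert h (Finset.range h) := by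
      rw [Finset.range_add_one]
    have hr : (Finset.range h).gcd w = ee w (h - 1) := by
      rw [ee, show h - 1 + 1 = h by omega]
    rw [ee, hsplit, Finset.gcd_insert, hr, heeh1]
    have : w h = γ := by simp [hw]
    rw [this]
    exact Nat.Coprime.gcd_eq_one (hco.symm)
  refine ⟨⟨?_, ?_, heeh, ?_⟩, ?_⟩
  · -- positivity
    intro i hi
    by_cases hih : i < h
    · simp only [hw, if_pos hih]
      exact Nat.mul_pos (by omega) (hpos i (by omega))
    · simp only [hw, if_neg hih]
      exact hγpos
  · -- decreasing
    intro k hk1 hkh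
    rcases lt_or_eq_of_le hkh with hlt | heq
    · have hk' : k ≤ h - 1 := by omega
      rw [heew k hk', heew (k - 1) (by omega)]
      exact mul_lt_mul_of_pos_left (hdec k hk1 hk') (by omega)
    · rw [heq, heeh, heeh1]; omega
  · -- growth
    intro k hk1 hkh
    rcases lt_or_eq_of_le hkh with hlt | heq
    · have hk' : k + 1 ≤ h - 1 := by omega
      rw [heew (k - 1) (by omega), heew k (by omega)]
      have h1 : w k = d * v k := by simp [hw, show k < h by omega]
      have h2 : w (k + 1) = d * v (k + 1) := by simp [hw, show k + 1 < h by omega]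
      rw [h1, h2]
      have := hineq k hk1 hk'
      calc d * ee v (k - 1) * (d * v k) = d * d * (ee v (k - 1) * v k) := by ring
        _ < d * d * (ee v k * v (k + 1)) :=
            mul_lt_mul_of_pos_left this (by positivity)
        _ = d * ee v k * (d * v (k + 1)) := by ring
    · -- k + 1 = h
      have hk : k = h - 1 := by omega
      subst hk
      rw [heew (h - 1 - 1) (by omega), heeh1]
      have h1 : w (h - 1) = d * v (h - 1) := by simp [hw, show h - 1 < h by omega]
      have h2 : w (h - 1 + 1) = γ := by simp [hw, show ¬ (h - 1 + 1 < h) by omega]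
      rw [h1, h2, show h - 1 - 1 = h - 2 by omega]
      calc d * ee v (h - 2) * (d * v (h - 1)) = d * (d * ee v (h - 2) * v (h - 1)) := by ring
        _ < d * γ := mul_lt_mul_of_pos_left hγ (by omega)
  · -- set equality
    have himg : w '' {i | i ≤ h} = (fun x => d * x) '' (v '' {i | i ≤ h - 1}) ∪ {γ} := by
      ext x
      constructor
      · rintro ⟨i, hi, rfl⟩
        simp only [Set.mem_setOf_eq] at hi
        by_cases hih : i < h
        · left
          exact ⟨v i, ⟨i, by simp only [Set.mem_setOf_eq]; omega, rfl⟩, by simp [hw, hih]⟩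
        · right
          simp [hw, hih]
      · rintro (⟨y, ⟨i, hi, rfl⟩, rfl⟩ | rfl)
        · simp only [Set.mem_setOf_eq] at hi
          exact ⟨i, by simp only [Set.mem_setOf_eq]; omega, by simp [hw, show i < h by omega]⟩
        · exact ⟨h, by simp, by simp [hw]⟩
    rw [himg, genSg_union_eq_gluing]
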